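/- Let A = K + ∑_{i≥2} K x^i ⊆ K[x] (the coordinate ring of the cusp over a field K of characteristic 0). Then Der_K(A) = K[x]·h|_A where h = x·d/dx; that is, every K-derivation of A is given by p(x)·x·d/dx restricted to A for some polynomial p ∈ K[x], and each such operator preserves A. -/

import Mathlib

/-- The coordinate ring of the cusp: the subalgebra `A = K + ∑_{i ≥ 2} K xⁱ` of `K[x]`,
i.e. (equivalently) the polynomials whose coefficient of `x` vanishes. -/
def cusp (K : Type*) [Field K] : Subalgebra K (Polynomial K) where
  carrier := {p | p.coeff 1 = 0}
  zero_mem' := by simp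
  one_mem' := by simp [Polynomial.coeff_one]
  add_mem' := by
    intro a b ha hb
    simp only [Set.mem_setOf_eq, Polynomial.coeff_add] at *
    rw [ha, hb, add_zero]
  mul_mem' := by
    intro a b ha hb
    simp only [Set.mem_setOf_eq] at *
    rw [Polynomial.coeff_mul, Finset.Nat.sum_antidiagonal_eq_sum_range_succ_mk]
    simp [Finset.sum_range_succ, ha, hb]
  algebraMap_mem' := by
    intro k
    simp [Polynomial.algebraMap_eq, Polynomial.coeff_C]

theorem memtest (K : Type*) [Field K] (n : ℕ) (h : n ≠ 1) :
    (Polynomial.X ^ n : Polynomial K) ∈ cusp K :=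
  show (Polynomial.X ^ n : Polynomial K).coeff 1 = 0 by
    simp [Polynomial.coeff_X_pow, Ne.symm h]

section aux
open Polynomial

variable {K : Type*} [Field K] [CharZero K] {A : Subalgebra K (Polynomial K)}
  (hA : ∀ (n : ℕ), n ≠ 1 → (X^n : Polynomial K) ∈ A)
  (hA' : ∀ a ∈ A, Polynomial.coeff a 1 = 0)
  (δ : Derivation K A A)

include hA hA' in
/-- On monomials, a derivation of `A` is given by `p·x·d/dx` for a single polynomial `p`. -/
lemma cusp_derivation_key : ∃ p : Polynomial K, ∀ (n : ℕ) (h : n ≠ 1),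
    ((δ ⟨X^n, hA n h⟩ : A) : Polynomial K) = p * (X * derivative (X^n : Polynomial K)) := by
  have p2 : (2:ℕ) ≠ 1 := by norm_num
  have p3 : (3:ℕ) ≠ 1 := by norm_num
  set f : Polynomial K := (δ ⟨X^2, hA 2 p2⟩ : Polynomial K) with hf
  set g : Polynomial K := (δ ⟨X^3, hA 3 p3⟩ : Polynomial K) with hg
  -- relation 3 X f = 2 g
  have h6 : (⟨X^2, hA 2 p2⟩ : A)^3 = (⟨X^3, hA 3 p3⟩ : A)^2 := by
    apply Subtype.ext
    show ((X:Polynomial K)^2)^3 = (X^3)^2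
    ring
  have hrel : 3 * X * f = 2 * g := by
    have h1 : ((δ ((⟨X^2, hA 2 p2⟩ : A)^3) : A) : Polynomial K)
        = ((δ ((⟨X^3, hA 3 p3⟩ : A)^2) : A) : Polynomial K) := by rw [h6]
    rw [Derivation.leibniz_pow, Derivation.leibniz_pow, smul_eq_mul, smul_eq_mul] at h1
    push_cast at h1
    apply mul_left_cancel₀ (pow_ne_zero 3 (X_ne_zero (R := K)))
    calc (X:Polynomial K)^3 * (3 * X * f) = 3 • ((X^2 : Polynomial K)^2 * f) := by
          simp [nsmul_eq_mul]; ring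
      _ = 2 • ((X^3 : Polynomial K)^1 * g) := h1
      _ = X^3 * (2 * g) := by simp [nsmul_eq_mul]; ring
  -- coefficient facts
  have hf1 : f.coeff 1 = 0 := hA' _ (δ ⟨X^2, hA 2 p2⟩).2
  have hg1 : g.coeff 1 = 0 := hA' _ (δ ⟨X^3, hA 3 p3⟩).2
  have hrel2 : (3:K) • (X * f) = (2:K) • g := by
    rw [smul_eq_C_mul, smul_eq_C_mul]
    calc C (3:K) * (X * f) = 3 * X * f := by simp only [map_ofNat]; ring
      _ = 2 * g := hrel
      _ = C (2:K) * g := by rw [map_ofNat]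
  have hf0 : f.coeff 0 = 0 := by
    have h2 := congrArg (fun q => Polynomial.coeff q 1) hrel2
    simp only [coeff_smul, coeff_X_mul, hg1, smul_zero, smul_eq_mul] at h2
    have h3 : (3:K) ≠ 0 := by norm_num
    field_simp at h2
    rcases mul_eq_zero.mp (h2.trans (mul_zero 2)) with h|h
    · norm_num at h
    · exact h
  -- f = 2 * p * X^2
  obtain ⟨f1, hf1'⟩ : (X : Polynomial K) ∣ f := X_dvd_iff.mpr hf0
  have hf10 : f1.coeff 0 = 0 := by
    have : (X * f1).coeff 1 = f1.coeff 0 := coeff_X_mul f1 0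
    rw [← hf1', hf1] at this
    exact this.symm
  obtain ⟨q, hq⟩ : (X : Polynomial K) ∣ f1 := X_dvd_iff.mpr hf10
  refine ⟨C (2⁻¹:K) * q, ?_⟩
  set p : Polynomial K := C (2⁻¹:K) * q with hp
  have h2C : (2 : Polynomial K) * C (2⁻¹:K) = 1 := by
    rw [show (2 : Polynomial K) = C (2:K) from (map_ofNat C 2).symm, ← C_mul]
    norm_num
  have hf2 : f = 2 * p * X^2 := by
    rw [hf1', hq, hp]
    calc X * (X * q) = 1 * q * X^2 := by ring
      _ = (2 * C (2⁻¹:K)) * q * X^2 := by rw [h2C]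
      _ = 2 * (C (2⁻¹:K) * q) * X^2 := by ring
  have hg2 : g = 3 * p * X^3 := by
    apply mul_left_cancel₀ (two_ne_zero (α := Polynomial K))
    rw [← hrel, hf2]
    ring
  intro n
  induction n using Nat.strong_induction_on with
  | _ n ih =>
    match n, ih with
    | 0, _ =>
      intro h
      have h1 : (⟨X^0, hA 0 h⟩ : A) = 1 := Subtype.ext (by show (X:Polynomial K)^0 = 1; ring)
      rw [h1, δ.map_one_eq_zero]
      simp
    | 1, _ => intro h; exact absurd rfl h
    | 2, _ =>
      intro h
      show f = _
      rw [hf2]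
      simp only [derivative_X_pow, C_eq_natCast, map_ofNat]
      push_cast
      ring
    | 3, _ =>
      intro h
      show g = _
      rw [hg2]
      simp only [derivative_X_pow, C_eq_natCast, map_ofNat]
      push_cast
      ring
    | (m+4), ih =>
      intro h
      have hm2 : (m+2) ≠ 1 := by omega
      have IH := ih (m+2) (by omega) hm2
      have hsplit : (⟨X^(m+4), hA _ h⟩ : A) = ⟨X^2, hA 2 p2⟩ * ⟨X^(m+2), hA _ hm2⟩ :=
        Subtype.ext (by show (X:Polynomial K)^(m+4) = X^2 * X^(m+2); ring)
      rw [hsplit, Derivation.leibniz, smul_eq_mul, smul_eq_mul]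
      push_cast
      rw [IH]
      show (X:Polynomial K)^2 * _ + X^(m+2) * f = _
      rw [hf2]
      simp only [derivative_X_pow, C_eq_natCast, map_ofNat]
      push_cast
      ring

include hA hA' in
/-- Every derivation of `A` is `p·x·d/dx` for some polynomial `p`. -/
lemma cusp_derivation_main (a : A) (p : Polynomial K)
    (hkey : ∀ (n : ℕ) (h : n ≠ 1),
      ((δ ⟨X^n, hA n h⟩ : A) : Polynomial K) = p * (X * derivative (X^n : Polynomial K))) :
    ((δ a : A) : Polynomial K) = p * (X * derivative (a : Polynomial K)) := by
  have hsupp : ∀ n ∈ (a:Polynomial K).support, n ≠ 1 := by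
    intro n hn he
    subst he
    exact (Polynomial.mem_support_iff.mp hn) (hA' _ a.2)
  have hdecomp' : (a:Polynomial K)
      = ∑ n ∈ (a:Polynomial K).support, (a:Polynomial K).coeff n • (X^n : Polynomial K) := by
    simp only [smul_eq_C_mul]
    exact Polynomial.as_sum_support_C_mul_X_pow _
  have hdecomp : a = ∑ n ∈ (a:Polynomial K).support.attach,
      ((a:Polynomial K).coeff n) • (⟨X^(n:ℕ), hA n (hsupp n n.2)⟩ : A) := by
    apply Subtype.ext
    rw [AddSubmonoidClass.coe_finset_sum]
    simp only [SetLike.val_smul]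
    rw [Finset.sum_attach _ (fun n => (a:Polynomial K).coeff n • (X^n : Polynomial K))]
    exact hdecomp'
  calc ((δ a : A) : Polynomial K)
      = ∑ n ∈ (a:Polynomial K).support.attach,
        ((a:Polynomial K).coeff n) • ((δ ⟨X^(n:ℕ), hA n (hsupp n n.2)⟩ : A) : Polynomial K) := by
        conv_lhs => rw [hdecomp]
        rw [map_sum]
        rw [AddSubmonoidClass.coe_finset_sum]
        refine Finset.sum_congr rfl fun n _ => ?_
        rw [Derivation.map_smul, SetLike.val_smul]
    _ = ∑ n ∈ (a:Polynomial K).support.attach,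
        ((a:Polynomial K).coeff n) • (p * (X * derivative (X^(n:ℕ) : Polynomial K))) := by
        refine Finset.sum_congr rfl fun n _ => ?_
        rw [hkey n (hsupp n n.2)]
    _ = p * (X * derivative (a : Polynomial K)) := by
        conv_rhs => rw [hdecomp']
        rw [map_sum, Finset.mul_sum, Finset.mul_sum]
        rw [Finset.sum_attach _
          (fun n => (a:Polynomial K).coeff n • (p * (X * derivative (X^n : Polynomial K))))]
        refine Finset.sum_congr rfl fun n _ => ?_
        rw [derivative_smul]
        rw [mul_smul_comm, mul_smul_comm]

end aux

/-- `Der_K(A) = K[x]·h` for the cusp algebra `A`, where `h = x·d/dx`: every operator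
`p(x)·x·d/dx` maps `A` into `A`, and every `K`-derivation of `A` is of this form. -/
theorem stmt8 (K : Type*) [Field K] [CharZero K] :
    (∀ (p : Polynomial K), ∀ a ∈ cusp K,
        p * (Polynomial.X * Polynomial.derivative a) ∈ cusp K) ∧
    (∀ δ : Derivation K (cusp K) (cusp K), ∃ p : Polynomial K,
        ∀ a : cusp K, ((δ a : Polynomial K)) =
          p * (Polynomial.X * Polynomial.derivative (a : Polynomial K))) := by
  constructor
  · intro p a ha
    have ha' : a.coeff 1 = 0 := ha
    suffices h : (p * (Polynomial.X * Polynomial.derivative a)).coeff 1 = 0 from h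
    rw [Polynomial.coeff_mul, Finset.Nat.sum_antidiagonal_eq_sum_range_succ_mk]
    simp [Finset.sum_range_succ, Polynomial.mul_coeff_zero, Polynomial.coeff_X_mul,
      Polynomial.coeff_derivative, ha']
  · intro δ
    have hA : ∀ (n : ℕ), n ≠ 1 → (Polynomial.X^n : Polynomial K) ∈ cusp K := memtest K
    have hA' : ∀ a ∈ cusp K, Polynomial.coeff a 1 = 0 := fun a ha => ha
    obtain ⟨p, hkey⟩ := cusp_derivation_key hA hA' δ
    exact ⟨p, fun a => cusp_derivation_main hA hA' δ a p hkey⟩
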